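/- Let K be a field, O a valuation subring of K, and B a finite-dimensional (associative, unital) K-algebra. For b ∈ B, let χ_b ∈ K[z] denote the characteristic polynomial of the K-linear endomorphism of B given by left multiplication by b. Then b is integral over O (i.e. b satisfies a monic polynomial whose coefficients lie in the image of O in B) if and only if all coefficients of χ_b lie in O. -/

import Mathlib

open Polynomial

/-- Coefficients of a product of polynomials with coefficients in a subring lie
in the subring. -/
lemma coeff_multiset_prod_mem_aux {R : Type*} [CommRing R] (A : Subring R)
    (s : Multiset R[X]) :
    (∀ p ∈ s, ∀ j, p.coeff j ∈ A) → ∀ j, s.prod.coeff j ∈ A := by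
  refine Multiset.induction_on s ?_ ?_
  · intro _ j
    rw [Multiset.prod_zero, Polynomial.coeff_one]
    split <;> simp [A.one_mem, A.zero_mem]
  · intro p s ih h j
    rw [Multiset.prod_cons, Polynomial.coeff_mul]
    exact A.sum_mem fun x hx => A.mul_mem (h p (Multiset.mem_cons_self p s) x.1)
      (ih (fun q hq i => h q (Multiset.mem_cons_of_mem hq) i) x.2)

/-- Evaluating a characteristic polynomial is taking the determinant of `r • 1 - M`. -/
lemma eval_charpoly_eq_det_aux {n R : Type*} [DecidableEq n] [Fintype n] [CommRing R]
    (M : Matrix n n R) (r : R) :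
    M.charpoly.eval r = (Matrix.scalar n r - M).det := by
  rw [Matrix.charpoly, ← Polynomial.coe_evalRingHom, RingHom.map_det]
  congr 1
  ext i j
  by_cases h : i = j
  · subst h
    simp [Matrix.charmatrix_apply_eq, Matrix.scalar_apply, Matrix.diagonal_apply_eq,
      Matrix.sub_apply]
  · simp [Matrix.charmatrix_apply_ne _ _ _ h, Matrix.scalar_apply,
      Matrix.diagonal_apply_ne _ h, Matrix.sub_apply]

/-- Any root of the characteristic polynomial of a matrix `M` is a root of any
monic polynomial annihilating `M`. -/
lemma isRoot_of_aeval_matrix_eq_zero_aux {n L : Type*} [DecidableEq n] [Fintype n] [Field L]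
    (M : Matrix n n L) {P : L[X]} (hPM : aeval M P = 0) {r : L}
    (hr : M.charpoly.IsRoot r) : P.IsRoot r := by
  have key := modByMonic_add_div P (X - C r)
  set q := P /ₘ (X - C r) with hq
  rw [modByMonic_X_sub_C_eq_C_eval] at key
  have h0 : (0 : Matrix n n L) =
      algebraMap L (Matrix n n L) (P.eval r) + (M - algebraMap L (Matrix n n L) r) * aeval M q := by
    have h := congrArg (aeval M) key
    rw [hPM] at h
    simpa [map_add, map_mul, map_sub, aeval_C, aeval_X] using h.symm
  have h1 : (algebraMap L (Matrix n n L) r - M) * aeval M q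
      = algebraMap L (Matrix n n L) (P.eval r) := by
    have h2 : (M - algebraMap L (Matrix n n L) r) * aeval M q
        = - algebraMap L (Matrix n n L) (P.eval r) := by
      rw [eq_neg_iff_add_eq_zero, add_comm]
      exact h0.symm
    calc (algebraMap L (Matrix n n L) r - M) * aeval M q
        = -((M - algebraMap L (Matrix n n L) r) * aeval M q) := by rw [← neg_sub, neg_mul]
      _ = algebraMap L (Matrix n n L) (P.eval r) := by rw [h2, neg_neg]
  have hscal : algebraMap L (Matrix n n L) r = Matrix.scalar n r := by
    rw [Matrix.algebraMap_eq_diagonal, Matrix.scalar_apply]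
    simp
  have hdet := congrArg Matrix.det h1
  rw [Matrix.det_mul, hscal, ← eval_charpoly_eq_det_aux, hr.eq_zero, zero_mul] at hdet
  have hdetc : (algebraMap L (Matrix n n L) (P.eval r)).det = P.eval r ^ Fintype.card n := by
    rw [Matrix.algebraMap_eq_diagonal, Matrix.det_diagonal]
    simp [Finset.prod_const, Finset.card_univ]
  rw [hdetc] at hdet
  rcases Nat.eq_zero_or_pos (Fintype.card n) with hcard | hcard
  · exfalso
    haveI : IsEmpty n := Fintype.card_eq_zero_iff.mp hcard
    have h1 : M.charpoly = 1 := by rw [Matrix.charpoly, Matrix.det_isEmpty]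
    have h2 := hr.eq_zero
    rw [h1, eval_one] at h2
    exact one_ne_zero h2
  · exact pow_eq_zero_iff hcard.ne' |>.mp hdet.symm

/-- A valuation subring is integrally closed in its field of fractions. -/
lemma ValuationSubring.mem_of_isIntegral_aux {K : Type*} [Field K] (O : ValuationSubring K)
    {x : K} (hx : IsIntegral O x) : x ∈ O := by
  have hv : Valuation.Integers O.valuation O :=
    { hom_inj := Subtype.coe_injective
      map_le_one := fun y => O.valuation_le_one y
      exists_of_le_one := fun r hr => ⟨⟨r, O.mem_of_valuation_le_one r hr⟩, rfl⟩ }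
  exact O.mem_of_valuation_le_one x (hv.mem_of_integral hx)

/-- An element `b` of a finite-dimensional `K`-algebra is integral over a
valuation subring `O` of `K` if and only if the coefficients of the
characteristic polynomial of left multiplication by `b` all lie in `O`. -/
theorem integral_iff_charpoly_coeff_mem (K B : Type*) [Field K] [Ring B]
    [Algebra K B] [FiniteDimensional K B] (O : ValuationSubring K) (b : B) :
    (∃ P : Polynomial K, P.Monic ∧ (∀ i, P.coeff i ∈ O) ∧ aeval b P = 0) ↔
      ∀ i, (LinearMap.charpoly (LinearMap.mulLeft K b)).coeff i ∈ O := by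
  classical
  set f := LinearMap.mulLeft K b with hf
  have hflmul : f = Algebra.lmul K B b := by
    ext x
    simp [hf]
  constructor
  · rintro ⟨P, hPmonic, hPmem, hPb⟩ i
    -- move to matrices
    set bas := Module.Free.chooseBasis K B with hbas
    set M := LinearMap.toMatrix bas bas f with hM
    have hMeq : LinearMap.toMatrixAlgEquiv bas f = M := rfl
    have hchar : M.charpoly = f.charpoly := LinearMap.charpoly_toMatrix f bas
    have hfP : aeval f P = 0 := by
      rw [hflmul, Polynomial.aeval_algHom_apply (Algebra.lmul K B) b P, hPb, map_zero]
    have hMP : aeval M P = 0 := by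
      rw [← hMeq]
      exact (Polynomial.aeval_algHom_apply (LinearMap.toMatrixAlgEquiv bas).toAlgHom f P).trans
        (by rw [hfP, map_zero])
    -- base change to the algebraic closure
    set L := AlgebraicClosure K with hL
    set ML := M.map (algebraMap K L) with hML
    have hMLP : aeval ML (P.map (algebraMap K L)) = 0 := by
      have h1 : aeval ML P = 0 := by
        have : ML = (Algebra.ofId K L).mapMatrix M := rfl
        rw [this, Polynomial.aeval_algHom_apply ((Algebra.ofId K L).mapMatrix) M P, hMP, map_zero]
      rw [Polynomial.aeval_map_algebraMap, h1]
    have hcharL : ML.charpoly = f.charpoly.map (algebraMap K L) := by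
      rw [hML, Matrix.charpoly_map, hchar]
    -- every root of the characteristic polynomial over L is integral over O
    have hroots : ∀ r ∈ ML.charpoly.roots, IsIntegral O r := by
      intro r hr
      have hrroot : (P.map (algebraMap K L)).IsRoot r :=
        isRoot_of_aeval_matrix_eq_zero_aux ML hMLP (isRoot_of_mem_roots hr)
      -- build a monic polynomial over O
      set P₀ : Polynomial O :=
        ∑ k ∈ Finset.range (P.natDegree + 1),
          Polynomial.C (⟨P.coeff k, hPmem k⟩ : O) * Polynomial.X ^ k with hP₀
      have hP₀map : P₀.map (algebraMap O K) = P := by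
        rw [hP₀]
        conv_rhs => rw [P.as_sum_range' (P.natDegree + 1) (Nat.lt_succ_self _)]
        rw [Polynomial.map_sum]
        refine Finset.sum_congr rfl fun k _ => ?_
        rw [Polynomial.map_mul, Polynomial.map_pow, Polynomial.map_C, Polynomial.map_X,
          ← Polynomial.C_mul_X_pow_eq_monomial]
        rfl
      have hP₀monic : P₀.Monic := by
        apply Polynomial.monic_of_injective (f := algebraMap O K)
        · exact Subtype.coe_injective
        · rw [hP₀map]; exact hPmonic
      refine ⟨P₀, hP₀monic, ?_⟩
      have : algebraMap O L = (algebraMap K L).comp (algebraMap O K) :=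
        IsScalarTower.algebraMap_eq O K L
      rw [Polynomial.eval₂_eq_eval_map, this, ← Polynomial.map_map, hP₀map,
        ← Polynomial.eval₂_eq_eval_map, ← Polynomial.eval_map]
      exact hrroot
    -- the coefficients are in the integral closure
    have hsplit : ML.charpoly.Splits := IsAlgClosed.splits _
    have hmonicL : ML.charpoly.Monic := Matrix.charpoly_monic ML
    have hprod : ML.charpoly = (ML.charpoly.roots.map fun a => X - C a).prod :=
      hsplit.eq_prod_roots_of_monic hmonicL
    set A := (integralClosure O L).toSubring with hA
    have hcoeffA : ∀ j, ML.charpoly.coeff j ∈ A := by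
      rw [hprod]
      refine coeff_multiset_prod_mem_aux A _ fun p hp j => ?_
      obtain ⟨r, hr, rfl⟩ := Multiset.mem_map.mp hp
      have hrA : r ∈ A := hroots r hr
      rcases j with _ | _ | j
      · simpa using A.neg_mem hrA
      · simpa using A.one_mem
      · simp [coeff_X, Polynomial.coeff_C]
    have hint : IsIntegral O (f.charpoly.coeff i) := by
      have hmem : algebraMap K L (f.charpoly.coeff i) ∈ integralClosure O L := by
        have := hcoeffA i
        rwa [hcharL, Polynomial.coeff_map] at this
      exact (isIntegral_algebraMap_iff ((algebraMap K L).injective)).mp hmem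
    exact ValuationSubring.mem_of_isIntegral_aux O hint
  · intro h
    refine ⟨f.charpoly, f.charpoly_monic, h, ?_⟩
    have h0 : aeval f f.charpoly = 0 := LinearMap.aeval_self_charpoly f
    have h1 : Algebra.lmul K B (aeval b f.charpoly) = 0 := by
      rw [← Polynomial.aeval_algHom_apply (Algebra.lmul K B) b f.charpoly, ← hflmul]
      exact h0
    have := congrArg (fun g : Module.End K B => g 1) h1
    simpa using this
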